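/- Let φ be a Parseval frame for H and m ∈ ℓ^∞. Then for every f ∈ H with ‖f‖ = 1 one has ⟨M_{m,φ,φ} f, f⟩ = Σ_n m_n |⟨f, φ_n⟩|², and consequently the numerical range of M_{m,φ,φ} (hence also its spectrum) is contained in the closed convex hull of the set {m_n : n ∈ ℕ}. -/

import Mathlib

open scoped InnerProductSpace

open scoped NNReal

/-- for a Parseval frame `φ`, `⟨M_{m,φ,φ} f, f⟩ = Σ m_n |⟨f,φ_n⟩|²` for unit
vectors `f`, hence the numerical range (and the spectrum) of `M_{m,φ,φ}` is contained in the
closed convex hull of `{m_n}`. -/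
theorem multiplier_parseval_numericalRange_convexHull
    {H : Type*} [NormedAddCommGroup H] [InnerProductSpace ℂ H] [CompleteSpace H]
    (φ : ℕ → H)
    (hφ : ∀ f : H, HasSum (fun n => ‖⟪φ n, f⟫_ℂ‖ ^ 2) (‖f‖ ^ 2))
    (m : ℕ → ℂ) (hm : ∃ C : ℝ, ∀ n, ‖m n‖ ≤ C)
    (M : H →L[ℂ] H)
    (hM : ∀ f : H, HasSum (fun n => (m n * ⟪φ n, f⟫_ℂ) • φ n) (M f)) :
    (∀ f : H, ‖f‖ = 1 →
      HasSum (fun n => m n * ((‖⟪φ n, f⟫_ℂ‖ ^ 2 : ℝ) : ℂ)) ⟪f, M f⟫_ℂ) ∧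
    {z : ℂ | ∃ f : H, ‖f‖ = 1 ∧ ⟪f, M f⟫_ℂ = z} ⊆
      closure (convexHull ℝ (Set.range m)) ∧
    spectrum ℂ M ⊆ closure (convexHull ℝ (Set.range m)) := by
  -- Part 1 (without the norm assumption)
  have h1 : ∀ f : H, HasSum (fun n => m n * ((‖⟪φ n, f⟫_ℂ‖ ^ 2 : ℝ) : ℂ)) ⟪f, M f⟫_ℂ := by
    intro f
    have := (innerSL ℂ f).hasSum (hM f)
    convert this using 2 with n
    · rfl
    simp only [innerSL_apply_apply, inner_smul_right]
    rw [← inner_conj_symm f (φ n)]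
    rw [mul_assoc, Complex.mul_conj']
    norm_cast
    rfl
  -- Part 2
  have h2 : {z : ℂ | ∃ f : H, ‖f‖ = 1 ∧ ⟪f, M f⟫_ℂ = z} ⊆
      closure (convexHull ℝ (Set.range m)) := by
    rintro z ⟨f, hf, rfl⟩
    set p : ℕ → ℝ := fun n => ‖⟪φ n, f⟫_ℂ‖ ^ 2 with hp
    have hp0 : ∀ n, 0 ≤ p n := fun n => by positivity
    have hpsum : HasSum p 1 := by simpa [hf] using hφ f
    have hzsum : HasSum (fun n => m n * ((p n : ℝ) : ℂ)) ⟪f, M f⟫_ℂ := h1 f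
    have ht : Filter.Tendsto (fun N => ∑ n ∈ Finset.range N, p n) Filter.atTop (nhds 1) :=
      hpsum.tendsto_sum_nat
    have hS : Filter.Tendsto (fun N => ∑ n ∈ Finset.range N, m n * ((p n : ℝ) : ℂ))
        Filter.atTop (nhds ⟪f, M f⟫_ℂ) := hzsum.tendsto_sum_nat
    have hq : Filter.Tendsto
        (fun N => (∑ n ∈ Finset.range N, p n)⁻¹ • ∑ n ∈ Finset.range N, m n * ((p n : ℝ) : ℂ))
        Filter.atTop (nhds ⟪f, M f⟫_ℂ) := by
      have := (ht.inv₀ one_ne_zero).smul hS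
      simpa using this
    refine mem_closure_of_tendsto hq ?_
    have hev : ∀ᶠ N in Filter.atTop, 0 < ∑ n ∈ Finset.range N, p n :=
      ht.eventually (eventually_gt_nhds one_pos)
    filter_upwards [hev] with N hN
    have : (Finset.range N).centerMass p m ∈ convexHull ℝ (Set.range m) :=
      Finset.centerMass_mem_convexHull _ (fun i _ => hp0 i) hN (fun i _ => Set.mem_range_self i)
    convert this using 1
    rw [Finset.centerMass]
    congr 1
    refine Finset.sum_congr rfl fun n _ => ?_
    rw [Complex.real_smul, mul_comm]
  refine ⟨fun f _ => h1 f, h2, ?_⟩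
  -- Part 3
  intro z hz
  by_contra hzK
  set K := closure (convexHull ℝ (Set.range m)) with hK
  have hKne : K.Nonempty := by
    exact ⟨m 0, subset_closure (subset_convexHull ℝ _ (Set.mem_range_self 0))⟩
  have hKc : IsClosed K := isClosed_closure
  have hd : 0 < Metric.infDist z K := (hKc.notMem_iff_infDist_pos hKne).1 hzK
  set d : ℝ≥0 := ⟨Metric.infDist z K, hd.le⟩ with hdd
  have hunit : IsUnit (algebraMap ℂ (H →L[ℂ] H) z - M) := by
    apply ContinuousLinearMap.isUnit_of_forall_le_norm_inner_map _ (c := d) (by exact_mod_cast hd)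
    intro x
    by_cases hx : x = 0
    · simp [hx]
    · have hxn : 0 < ‖x‖ := norm_pos_iff.2 hx
      set g : H := (‖x‖ : ℝ)⁻¹ • x with hg
      have hgn : ‖g‖ = 1 := by
        rw [hg, norm_smul]
        simp [abs_of_nonneg (inv_nonneg.2 hxn.le), inv_mul_cancel₀ hxn.ne']
      have hmem : ⟪g, M g⟫_ℂ ∈ K := h2 ⟨g, hgn, rfl⟩
      have hdist : (d : ℝ) ≤ dist z ⟪g, M g⟫_ℂ := Metric.infDist_le_dist_of_mem hmem
      have hxg : x = ((‖x‖ : ℝ) : ℂ) • g := by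
        rw [hg, ← Complex.coe_algebraMap, algebraMap_smul, smul_smul,
          mul_inv_cancel₀ hxn.ne', one_smul]
      have hinner : ⟪(algebraMap ℂ (H →L[ℂ] H) z - M) x, x⟫_ℂ
          = ((‖x‖ ^ 2 : ℝ) : ℂ) * ((starRingEnd ℂ) z - ⟪M g, g⟫_ℂ) := by
        simp only [ContinuousLinearMap.sub_apply, ContinuousLinearMap.algebraMap_apply,
          inner_sub_left]
        rw [hxg]
        simp only [map_smul, inner_smul_left, inner_smul_right, smul_smul, smul_eq_mul,
          Complex.conj_ofReal, map_mul]
        rw [inner_self_eq_norm_sq_to_K (𝕜 := ℂ)]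
        have hng : ‖((‖x‖ : ℝ) : ℂ) • g‖ = ‖x‖ := by
          rw [norm_smul, hgn, mul_one, Complex.norm_real, Real.norm_eq_abs,
            abs_of_nonneg hxn.le]
        rw [hng, hgn]
        push_cast
        ring
      have key : ‖⟪(algebraMap ℂ (H →L[ℂ] H) z - M) x, x⟫_ℂ‖
          = ‖x‖ ^ 2 * dist z ⟪g, M g⟫_ℂ := by
        rw [hinner, norm_mul]
        have h1' : ‖((‖x‖ ^ 2 : ℝ) : ℂ)‖ = ‖x‖ ^ 2 := by
          rw [Complex.norm_real, Real.norm_eq_abs, abs_of_nonneg (by positivity)]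
        have h2' : (starRingEnd ℂ) z - ⟪M g, g⟫_ℂ = (starRingEnd ℂ) (z - ⟪g, M g⟫_ℂ) := by
          rw [map_sub, inner_conj_symm]
        rw [h1', h2', RCLike.norm_conj, dist_eq_norm]
      rw [key]
      exact mul_le_mul_of_nonneg_left hdist (by positivity)
  exact (spectrum.notMem_iff.2 hunit) hz
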